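/- A partial order ≺ on {1,…,n} arises from a weak order interval — that is, there exist permutations σ, τ of {1,…,n} with inv(σ) ⊆ inv(τ) such that for all a < b: b ≺ a iff (a,b) ∈ inv(σ), and a ≺ b iff (a,b) ∉ inv(τ) — if and only if for all 1 ≤ a < b < c ≤ n: (a ≺ c implies a ≺ b or b ≺ c) and (c ≺ a implies c ≺ b or b ≺ a). -/

import Mathlib

/-- The set of (value) inversions of a permutation `σ` of `{1,…,n}`. -/
def invSet (n : ℕ) (σ : Equiv.Perm (Fin n)) : Set (Fin n × Fin n) :=
  {p | p.1 < p.2 ∧ σ⁻¹ p.2 < σ⁻¹ p.1}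

/-- Any strict total order on a fintype of cardinality `n` is realized by an
equivalence with `Fin n`. -/
lemma exists_equiv_of_sto {α : Type*} [Fintype α] {n : ℕ} (h : Fintype.card α = n)
    (q : α → α → Prop) (hq : IsStrictTotalOrder α q) :
    ∃ e : α ≃ Fin n, ∀ a b, q a b ↔ e a < e b := by
  classical
  letI : LinearOrder α := linearOrderOfSTO q
  let iso := monoEquivOfFin α h
  refine ⟨iso.symm.toEquiv, fun a b => ?_⟩
  have h1 : q a b ↔ a < b := Iff.rfl
  rw [h1]
  exact iso.symm.lt_iff_lt.symm

/-- A closed and co-closed set of pairs is the inversion set of a permutation. -/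
lemma exists_perm_of_closed {n : ℕ} (S : Fin n → Fin n → Prop)
    (hcl : ∀ a b c : Fin n, a < b → b < c → S a b → S b c → S a c)
    (hco : ∀ a b c : Fin n, a < b → b < c → S a c → S a b ∨ S b c) :
    ∃ σ : Equiv.Perm (Fin n), ∀ a b : Fin n, a < b → ((a, b) ∈ invSet n σ ↔ S a b) := by
  classical
  set q : Fin n → Fin n → Prop := fun a b => (a < b ∧ ¬ S a b) ∨ (b < a ∧ S b a) with hqdef
  have hq : IsStrictTotalOrder (Fin n) q := by
    refine { trichotomous := ?_, irrefl := ?_, trans := ?_ }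
    · intro a b hn1 hn2
      rcases lt_trichotomy a b with hab | rfl | hba
      · by_cases hs : S a b
        · exact absurd (show q b a from Or.inr ⟨hab, hs⟩) hn2
        · exact absurd (show q a b from Or.inl ⟨hab, hs⟩) hn1
      · rfl
      · by_cases hs : S b a
        · exact absurd (show q a b from Or.inr ⟨hba, hs⟩) hn1
        · exact absurd (show q b a from Or.inl ⟨hba, hs⟩) hn2
    · intro a hqa
      rcases hqa with ⟨h, _⟩ | ⟨h, _⟩ <;> exact lt_irrefl a h
    · rintro a b c (⟨hab, hSab⟩ | ⟨hba, hSba⟩) (⟨hbc, hSbc⟩ | ⟨hcb, hScb⟩)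
      · -- a < b, ¬S a b; b < c, ¬S b c
        refine Or.inl ⟨hab.trans hbc, fun hSac => ?_⟩
        rcases hco a b c hab hbc hSac with h | h
        · exact hSab h
        · exact hSbc h
      · -- a < b, ¬S a b; c < b, S c b
        rcases lt_trichotomy a c with hac | rfl | hca
        · refine Or.inl ⟨hac, fun hSac => hSab (hcl a c b hac hcb hSac hScb)⟩
        · exact absurd hScb hSab
        · refine Or.inr ⟨hca, ?_⟩
          rcases hco c a b hca hab hScb with h | h
          · exact h
          · exact absurd h hSab
      · -- b < a, S b a; b < c, ¬S b c
        rcases lt_trichotomy a c with hac | rfl | hca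
        · refine Or.inl ⟨hac, fun hSac => hSbc (hcl b a c hba hac hSba hSac)⟩
        · exact absurd hSba hSbc
        · refine Or.inr ⟨hca, ?_⟩
          rcases hco b c a hbc hca hSba with h | h
          · exact absurd h hSbc
          · exact h
      · -- b < a, S b a; c < b, S c b
        exact Or.inr ⟨hcb.trans hba, hcl c b a hcb hba hScb hSba⟩
  obtain ⟨e, he⟩ := exists_equiv_of_sto (Fintype.card_fin n) q hq
  refine ⟨e.symm, fun a b hab => ?_⟩
  have hinv : (e.symm : Equiv.Perm (Fin n))⁻¹ = (e : Equiv.Perm (Fin n)) := rfl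
  constructor
  · rintro ⟨-, hlt⟩
    rw [hinv] at hlt
    have : q b a := (he b a).mpr hlt
    rcases this with ⟨h, _⟩ | ⟨_, h⟩
    · exact absurd hab (lt_asymm h)
    · exact h
  · intro hS
    refine ⟨hab, ?_⟩
    rw [hinv]
    exact (he b a).mp (Or.inr ⟨hab, hS⟩)

/-- A partial order `r` on `{1,…,n}` arises from a weak order interval
(there exist permutations `σ, τ` with `inv(σ) ⊆ inv(τ)` such that for `a < b`:
`r b a ↔ (a,b) ∈ inv(σ)` and `r a b ↔ (a,b) ∉ inv(τ)`) if and only if for all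
`a < b < c`: `r a c → r a b ∨ r b c` and `r c a → r c b ∨ r b a`. -/
theorem weak_order_interval_poset_characterization (n : ℕ)
    (r : Fin n → Fin n → Prop) (hr : IsPartialOrder (Fin n) r) :
    (∃ σ τ : Equiv.Perm (Fin n), invSet n σ ⊆ invSet n τ ∧
      ∀ a b : Fin n, a < b →
        ((r b a ↔ (a, b) ∈ invSet n σ) ∧ (r a b ↔ (a, b) ∉ invSet n τ))) ↔
    (∀ a b c : Fin n, a < b → b < c →
      ((r a c → r a b ∨ r b c) ∧ (r c a → r c b ∨ r b a))) := by
  have rtrans : ∀ a b c, r a b → r b c → r a c := fun a b c => hr.trans a b c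
  have rantisymm : ∀ a b, r a b → r b a → a = b := fun a b => hr.antisymm a b
  constructor
  · rintro ⟨σ, τ, -, hstc⟩ a b c hab hbc
    constructor
    · intro hac
      by_contra hcon
      push_neg at hcon
      obtain ⟨h1, h2⟩ := hcon
      have hτab : τ⁻¹ b < τ⁻¹ a := by
        by_contra h
        exact h1 (((hstc a b hab).2).mpr (fun hm => h hm.2))
      have hτbc : τ⁻¹ c < τ⁻¹ b := by
        by_contra h
        exact h2 (((hstc b c hbc).2).mpr (fun hm => h hm.2))
      have hτac : ¬ τ⁻¹ c < τ⁻¹ a := fun h =>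
        ((hstc a c (hab.trans hbc)).2.mp hac) ⟨hab.trans hbc, h⟩
      exact hτac (hτbc.trans hτab)
    · intro hca
      by_contra hcon
      push_neg at hcon
      obtain ⟨h1, h2⟩ := hcon
      have hσac : σ⁻¹ c < σ⁻¹ a := ((hstc a c (hab.trans hbc)).1.mp hca).2
      have hσcb : ¬ σ⁻¹ c < σ⁻¹ b := fun h => h1 (((hstc b c hbc).1).mpr ⟨hbc, h⟩)
      have hσba : ¬ σ⁻¹ b < σ⁻¹ a := fun h => h2 (((hstc a b hab).1).mpr ⟨hab, h⟩)
      push_neg at hσcb hσba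
      exact absurd (hσac.trans_le (hσba.trans hσcb)) (lt_irrefl _)
  · intro hyp
    obtain ⟨σ, hσ⟩ := exists_perm_of_closed (fun a b => r b a)
      (fun a b c _ _ h1 h2 => rtrans c b a h2 h1)
      (fun a b c hab hbc h => (hyp a b c hab hbc).2 h |>.symm)
    obtain ⟨τ, hτ⟩ := exists_perm_of_closed (fun a b => ¬ r a b)
      (fun a b c hab hbc h1 h2 hac => by
        rcases (hyp a b c hab hbc).1 hac with h | h
        exacts [h1 h, h2 h])
      (fun a b c _ _ h => by
        by_contra hcon
        rw [not_or, not_not, not_not] at hcon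
        exact h (rtrans a b c hcon.1 hcon.2))
    refine ⟨σ, τ, ?_, fun a b hab => ⟨(hσ a b hab).symm, ?_⟩⟩
    · rintro ⟨a, b⟩ hm
      have hab : a < b := hm.1
      have hrba : r b a := (hσ a b hab).mp hm
      have : ¬ r a b := fun h => absurd (rantisymm a b h hrba) (ne_of_lt hab)
      exact (hτ a b hab).mpr this
    · rw [hτ a b hab]
      exact not_not.symm
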